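/- Let 0 ≤ c < d < 2, φ continuous on [c,d], and y ∈ C¹([0,a]) with y(0) = 0. Then Jy(t) = ∫_c^d φ(γ) I^{2-γ}y(t) dγ is continuously differentiable on [0,a] and (d/dt) Jy(t) = ∫_c^d φ(γ) I^{2-γ}y'(t) dγ. -/

import Mathlib

open MeasureTheory Set intervalIntegral Topology Filter

lemma measurable_rpow_const'' (r : ℝ) : Measurable fun x : ℝ => x ^ r :=
  measurable_of_continuousOn_compl_singleton 0 fun x hx =>
    (Real.continuousAt_rpow_const x r (Or.inl hx)).continuousWithinAt

lemma ext_continuous {lo hi : ℝ} (h : lo ≤ hi) {f : ℝ → ℝ} (hf : ContinuousOn f (Icc lo hi)) :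
    Continuous (fun x => f (min (max x lo) hi)) := by
  apply hf.comp_continuous (by continuity)
  intro x
  exact ⟨le_min (le_max_right _ _) h, min_le_right _ _⟩

lemma ext_eq {lo hi : ℝ} {f : ℝ → ℝ} {x : ℝ} (hx : x ∈ Icc lo hi) :
    f (min (max x lo) hi) = f x := by
  rw [max_eq_left hx.1, min_eq_left hx.2]

-- kernel integral
lemma kernel_int {r : ℝ} (hr : -1 < r) {u t : ℝ} (hut : u ≤ t) :
    ∫ x in u..t, (t - x) ^ r = (t - u) ^ (r + 1) / (r + 1) := by
  have := intervalIntegral.integral_comp_sub_left (a := u) (b := t) (fun s => s ^ r) t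
  simp only [sub_self, sub_zero] at this
  rw [this, integral_rpow (Or.inl hr), Real.zero_rpow (by linarith), sub_zero]

lemma kernel_int' {r : ℝ} (hr : -1 < r) {u t : ℝ} (hut : u ≤ t) :
    ∫ σ in u..t, (σ - u) ^ r = (t - u) ^ (r + 1) / (r + 1) := by
  have := intervalIntegral.integral_comp_sub_right (a := u) (b := t) (fun s => s ^ r) u
  simp only [sub_self] at this
  rw [this, integral_rpow (Or.inl hr), Real.zero_rpow (by linarith), sub_zero]

lemma kernel_ii {r : ℝ} (hr : -1 < r) (t : ℝ) :
    IntervalIntegrable (fun x => (t - x) ^ r) volume 0 t := by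
  have := (intervalIntegrable_rpow' hr (a := 0) (b := t)).comp_sub_left t
  simpa using this.symm

/-- triangular Fubini -/
lemma tri_swap {t : ℝ} (ht : 0 ≤ t) (f : ℝ → ℝ → ℝ)
    (hint : Integrable (fun p : ℝ × ℝ => {q : ℝ × ℝ | q.2 ≤ q.1}.indicator (fun q => f q.1 q.2) p)
      ((volume.restrict (Ioc 0 t)).prod (volume.restrict (Ioc 0 t)))) :
    (∫ x in (0:ℝ)..t, ∫ u in (0:ℝ)..x, f x u) = ∫ u in (0:ℝ)..t, ∫ x in u..t, f x u := by
  set F : ℝ × ℝ → ℝ := fun p => {q : ℝ × ℝ | q.2 ≤ q.1}.indicator (fun q => f q.1 q.2) p with hF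
  have key : ∀ x u : ℝ, F (x, u) = (Iic x).indicator (f x) u := by
    intro x u
    simp only [hF, Set.indicator_apply, mem_setOf_eq, mem_Iic]
  rw [intervalIntegral.integral_of_le ht, intervalIntegral.integral_of_le ht]
  have L : ∀ x ∈ Ioc (0:ℝ) t, (∫ u in (0:ℝ)..x, f x u) = ∫ u in Ioc 0 t, F (x, u) := by
    intro x hx
    rw [intervalIntegral.integral_of_le hx.1.le]
    have : ∫ u in Ioc 0 t, F (x, u) = ∫ u in Ioc 0 t, (Iic x).indicator (f x) u := by
      simp_rw [key]
    rw [this, setIntegral_indicator measurableSet_Iic, Set.Ioc_inter_Iic, min_eq_right hx.2]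
  have R : ∀ u ∈ Ioc (0:ℝ) t, (∫ x in Ioc 0 t, F (x, u)) = ∫ x in u..t, f x u := by
    intro u hu
    have : ∫ x in Ioc 0 t, F (x, u) = ∫ x in Ioc 0 t, (Ici u).indicator (fun x => f x u) x := by
      apply setIntegral_congr_fun measurableSet_Ioc
      intro x _
      simp only [hF, Set.indicator_apply, mem_setOf_eq, mem_Ici]
    rw [this, setIntegral_indicator measurableSet_Ici]
    have hset : Ioc (0:ℝ) t ∩ Ici u = Icc u t := by
      ext z; simp only [mem_inter_iff, mem_Ioc, mem_Ici, mem_Icc]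
      constructor
      · rintro ⟨⟨_, h2⟩, h3⟩; exact ⟨h3, h2⟩
      · rintro ⟨h1, h2⟩; exact ⟨⟨lt_of_lt_of_le hu.1 h1, h2⟩, h1⟩
    rw [hset, integral_Icc_eq_integral_Ioc, ← intervalIntegral.integral_of_le hu.2]
  rw [setIntegral_congr_fun measurableSet_Ioc L]
  have swap := MeasureTheory.integral_integral_swap (f := fun x u => F (x, u))
    (μ := volume.restrict (Ioc 0 t)) (ν := volume.restrict (Ioc 0 t)) (by exact hint)
  rw [swap]
  exact setIntegral_congr_fun measurableSet_Ioc fun u hu => R u hu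
lemma K5 {r t M : ℝ} (hr : -1 < r) (ht : 0 ≤ t) {Y Y' : ℝ → ℝ} (hY' : Continuous Y')
    (hM : ∀ x, |Y' x| ≤ M)
    (hY : ∀ x ∈ Icc 0 t, Y x = ∫ u in (0:ℝ)..x, Y' u) :
    (∫ x in (0:ℝ)..t, (t - x) ^ r * Y x)
      = ∫ u in (0:ℝ)..t, (t - u) ^ (r + 1) / (r + 1) * Y' u := by
  have step1 : (∫ x in (0:ℝ)..t, (t - x) ^ r * Y x)
      = ∫ x in (0:ℝ)..t, ∫ u in (0:ℝ)..x, (t - x) ^ r * Y' u := by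
    apply intervalIntegral.integral_congr
    intro x hx
    rw [uIcc_of_le ht] at hx
    show (t - x) ^ r * Y x = ∫ u in (0:ℝ)..x, (t - x) ^ r * Y' u
    rw [hY x hx, intervalIntegral.integral_const_mul]
  rw [step1]
  have hint : Integrable
      (fun p : ℝ × ℝ => {q : ℝ × ℝ | q.2 ≤ q.1}.indicator
        (fun q => (t - q.1) ^ r * Y' q.2) p)
      ((volume.restrict (Ioc 0 t)).prod (volume.restrict (Ioc 0 t))) := by
    apply Integrable.indicator _ (measurableSet_le measurable_snd measurable_fst)
    exact Integrable.mul_prod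
      ((intervalIntegrable_iff_integrableOn_Ioc_of_le ht).mp (kernel_ii hr t))
      (hY'.integrableOn_Ioc)
  rw [tri_swap ht _ hint]
  apply intervalIntegral.integral_congr
  intro u hu
  rw [uIcc_of_le ht] at hu
  show (∫ x in u..t, (t - x) ^ r * Y' u) = (t - u) ^ (r + 1) / (r + 1) * Y' u
  rw [intervalIntegral.integral_mul_const, kernel_int hr hu.2]

lemma K6 {r t M : ℝ} (hr : -1 < r) (ht : 0 ≤ t) {Y' : ℝ → ℝ} (hY' : Continuous Y')
    (hM : ∀ x, |Y' x| ≤ M) :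
    (∫ σ in (0:ℝ)..t, ∫ x in (0:ℝ)..σ, (σ - x) ^ r * Y' x)
      = ∫ u in (0:ℝ)..t, (t - u) ^ (r + 1) / (r + 1) * Y' u := by
  have hM0 : 0 ≤ M := (abs_nonneg _).trans (hM 0)
  have hr1 : (0:ℝ) < r + 1 := by linarith
  set F : ℝ × ℝ → ℝ := fun p => {q : ℝ × ℝ | q.2 ≤ q.1}.indicator
    (fun q => (q.1 - q.2) ^ r * Y' q.2) p with hF
  have hFmeas : Measurable F := by
    apply Measurable.indicator _ (measurableSet_le measurable_snd measurable_fst)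
    exact ((measurable_rpow_const'' r).comp (measurable_fst.sub measurable_snd)).mul
      (hY'.measurable.comp measurable_snd)
  have slice_ii : ∀ σ : ℝ, 0 ≤ σ →
      IntervalIntegrable (fun x => (σ - x) ^ r * Y' x) volume 0 σ :=
    fun σ hσ => (kernel_ii hr σ).mul_continuousOn hY'.continuousOn
  have slice_int : ∀ σ ∈ Ioc (0:ℝ) t,
      Integrable (fun x => F (σ, x)) (volume.restrict (Ioc 0 t)) := by
    intro σ hσ
    have : (fun x => F (σ, x)) = (Iic σ).indicator (fun x => (σ - x) ^ r * Y' x) := by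
      funext x; simp only [hF, Set.indicator_apply, mem_setOf_eq, mem_Iic]
    rw [this, integrable_indicator_iff measurableSet_Iic, IntegrableOn,
      Measure.restrict_restrict measurableSet_Iic]
    have hset : Iic σ ∩ Ioc 0 t = Ioc 0 σ := by
      ext z; simp only [mem_inter_iff, mem_Iic, mem_Ioc]
      exact ⟨fun ⟨h1, h2, h3⟩ => ⟨h2, h1⟩, fun ⟨h1, h2⟩ => ⟨h2, h1, h2.trans hσ.2⟩⟩
    rw [hset]
    exact (intervalIntegrable_iff_integrableOn_Ioc_of_le hσ.1.le).mp (slice_ii σ hσ.1.le)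
  have hint : Integrable F ((volume.restrict (Ioc 0 t)).prod (volume.restrict (Ioc 0 t))) := by
    rw [MeasureTheory.integrable_prod_iff hFmeas.aestronglyMeasurable]
    constructor
    · filter_upwards [ae_restrict_mem measurableSet_Ioc] with σ hσ using slice_int σ hσ
    · apply Integrable.mono' (integrable_const (M * (t ^ (r+1) / (r+1))))
      · exact hFmeas.aestronglyMeasurable.norm.integral_prod_right'
      · filter_upwards [ae_restrict_mem measurableSet_Ioc] with σ hσ
        have h1 : (∫ x, ‖F (σ, x)‖ ∂(volume.restrict (Ioc 0 t)))
            = ∫ x in Ioc (0:ℝ) σ, ‖(σ - x) ^ r * Y' x‖ := by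
          have e1 : ∀ x, ‖F (σ, x)‖ = (Iic σ).indicator (fun x => ‖(σ - x) ^ r * Y' x‖) x := by
            intro x
            simp only [hF, Set.indicator_apply, mem_setOf_eq, mem_Iic, apply_ite norm, norm_zero]
          simp_rw [e1]
          rw [setIntegral_indicator measurableSet_Iic, Set.Ioc_inter_Iic, min_eq_right hσ.2]
        rw [Real.norm_eq_abs, h1]
        have h2 : (∫ x in Ioc (0:ℝ) σ, ‖(σ - x) ^ r * Y' x‖)
            ≤ ∫ x in Ioc (0:ℝ) σ, M * (σ - x) ^ r := by
          apply setIntegral_mono_on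
          · exact ((slice_ii σ hσ.1.le).norm.1.mono_set (by simp)).congr
              (by filter_upwards with x using rfl)
          · exact ((kernel_ii hr σ).const_mul M).1.mono_set (by simp [hσ.1.le])
          · exact measurableSet_Ioc
          · intro x hx
            rw [norm_mul, Real.norm_eq_abs, Real.norm_eq_abs,
              abs_of_nonneg (Real.rpow_nonneg (by linarith [hx.2]) r), mul_comm M]
            exact mul_le_mul_of_nonneg_left (hM x) (Real.rpow_nonneg (by linarith [hx.2]) r)

        have h3 : (∫ x in Ioc (0:ℝ) σ, M * (σ - x) ^ r) = M * (σ ^ (r+1) / (r+1)) := by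
          rw [← intervalIntegral.integral_of_le hσ.1.le, intervalIntegral.integral_const_mul,
            kernel_int hr hσ.1.le, sub_zero]
        have h4 : σ ^ (r+1) ≤ t ^ (r+1) :=
          Real.rpow_le_rpow hσ.1.le hσ.2 hr1.le
        calc |∫ x in Ioc (0:ℝ) σ, ‖(σ - x) ^ r * Y' x‖| 
            = ∫ x in Ioc (0:ℝ) σ, ‖(σ - x) ^ r * Y' x‖ := by
              rw [abs_of_nonneg]
              exact setIntegral_nonneg measurableSet_Ioc fun x _ => norm_nonneg _
          _ ≤ M * (σ ^ (r+1) / (r+1)) := h2.trans_eq h3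
          _ ≤ M * (t ^ (r+1) / (r+1)) := by gcongr
  rw [tri_swap ht _ hint]
  apply intervalIntegral.integral_congr
  intro u hu
  rw [uIcc_of_le ht] at hu
  show (∫ σ in u..t, (σ - u) ^ r * Y' u) = (t - u) ^ (r + 1) / (r + 1) * Y' u
  rw [intervalIntegral.integral_mul_const, kernel_int' hr hu.2]
lemma JC {c d a M : ℝ} (hcd : c ≤ d) (hd : d < 2) (ha : 0 ≤ a)
    {Y' : ℝ → ℝ} (hY' : Continuous Y') (hM : ∀ x, |Y' x| ≤ M) :
    ContinuousOn (fun p : ℝ × ℝ => ∫ s in (0:ℝ)..p.2, s ^ (1 - p.1) * Y' (p.2 - s))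
      (Icc c d ×ˢ Icc 0 a) := by
  have h1c : (-1:ℝ) < 1 - c := by linarith
  have h1d : (-1:ℝ) < 1 - d := by linarith
  have hM0 : 0 ≤ M := (abs_nonneg _).trans (hM 0)
  set S : Set (ℝ × ℝ) := Icc c d ×ˢ Icc 0 a with hS
  set G : ℝ × ℝ → ℝ → ℝ :=
    fun p s => (Ioc 0 p.2).indicator (fun s => s ^ (1 - p.1) * Y' (p.2 - s)) s with hG
  set bound : ℝ → ℝ := fun s => M * (s ^ (1 - c) + s ^ (1 - d)) with hbound
  intro p₀ hp₀
  have hγ₀ : p₀.1 ∈ Icc c d := hp₀.1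
  have ht₀ : p₀.2 ∈ Icc (0:ℝ) a := hp₀.2
  have key : ∀ p ∈ S, (∫ s in (0:ℝ)..p.2, s ^ (1 - p.1) * Y' (p.2 - s))
      = ∫ s in Ioc (0:ℝ) a, G p s := by
    intro p hp
    rw [hG]
    rw [setIntegral_indicator measurableSet_Ioc, Set.Ioc_inter_Ioc, max_self,
      min_eq_right hp.2.2, intervalIntegral.integral_of_le hp.2.1]
  refine ContinuousWithinAt.congr ?_ (fun p hp => key p hp) (key p₀ hp₀)
  apply MeasureTheory.continuousWithinAt_of_dominated (bound := bound)
  · apply Filter.Eventually.of_forall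
    intro p
    exact (Measurable.indicator ((measurable_rpow_const'' _).mul
      (hY'.measurable.comp (measurable_const.sub measurable_id))) measurableSet_Ioc
      ).aestronglyMeasurable
  · filter_upwards [eventually_mem_nhdsWithin] with p hp
    filter_upwards [ae_restrict_mem measurableSet_Ioc] with s hs
    rw [hG]
    simp only [Set.indicator_apply]
    split_ifs with hmem
    · rw [norm_mul, Real.norm_eq_abs, Real.norm_eq_abs,
        abs_of_nonneg (Real.rpow_nonneg hs.1.le _)]
      have hb1 : s ^ (1 - p.1) ≤ s ^ (1 - c) + s ^ (1 - d) := by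
        rcases le_or_gt s 1 with h1 | h1
        · calc s ^ (1 - p.1) ≤ s ^ (1 - d) :=
                Real.rpow_le_rpow_of_exponent_ge hs.1 h1 (by linarith [hp.1.2])
            _ ≤ s ^ (1 - c) + s ^ (1 - d) := by
                nlinarith [Real.rpow_nonneg hs.1.le (1 - c)]
        · calc s ^ (1 - p.1) ≤ s ^ (1 - c) :=
                Real.rpow_le_rpow_of_exponent_le h1.le (by linarith [hp.1.1])
            _ ≤ s ^ (1 - c) + s ^ (1 - d) := by
                nlinarith [Real.rpow_nonneg hs.1.le (1 - d)]
      calc s ^ (1 - p.1) * |Y' (p.2 - s)| ≤ s ^ (1 - p.1) * M :=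
            mul_le_mul_of_nonneg_left (hM _) (Real.rpow_nonneg hs.1.le _)
        _ ≤ (s ^ (1 - c) + s ^ (1 - d)) * M :=
            mul_le_mul_of_nonneg_right hb1 hM0
        _ = bound s := by rw [hbound]; ring
    · rw [norm_zero, hbound]
      have := Real.rpow_nonneg hs.1.le (1 - c)
      have := Real.rpow_nonneg hs.1.le (1 - d)
      positivity
  · exact (((intervalIntegrable_rpow' h1c (a := 0) (b := a)).add
      (intervalIntegrable_rpow' h1d)).const_mul M).1
  · have hne : ∀ᵐ s : ℝ ∂(volume.restrict (Ioc 0 a)), s ≠ p₀.2 := by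
      apply ae_restrict_of_ae
      refine ae_iff.mpr ?_
      have : {s : ℝ | ¬ s ≠ p₀.2} = {p₀.2} := by ext z; simp
      rw [this]
      exact measure_singleton _
    filter_upwards [ae_restrict_mem measurableSet_Ioc, hne] with s hs hsne
    rcases lt_or_gt_of_ne hsne with hlt | hgt
    · -- s < p₀.2 : eventually the indicator is on
      have h1 : {p : ℝ × ℝ | s < p.2} ∈ 𝓝 p₀ :=
        (isOpen_lt continuous_const continuous_snd).mem_nhds hlt
      have hev : ∀ᶠ p in 𝓝[S] p₀, G p s = s ^ (1 - p.1) * Y' (p.2 - s) := by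
        filter_upwards [nhdsWithin_le_nhds h1] with p hp
        exact Set.indicator_of_mem (Set.mem_Ioc.mpr ⟨hs.1, le_of_lt hp⟩) _
      have hcont : ContinuousAt (fun p : ℝ × ℝ => s ^ (1 - p.1) * Y' (p.2 - s)) p₀ := by
        have hrp : ContinuousAt (fun p : ℝ × ℝ => s ^ (1 - p.1)) p₀ := by
          have hq : Continuous (fun p : ℝ × ℝ => ((s, 1 - p.1) : ℝ × ℝ)) :=
            continuous_const.prodMk (continuous_const.sub continuous_fst)
          have := ContinuousAt.comp (g := fun q : ℝ × ℝ => q.1 ^ q.2)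
            (f := fun p : ℝ × ℝ => ((s, 1 - p.1) : ℝ × ℝ)) (x := p₀)
            (Real.continuousAt_rpow (s, 1 - p₀.1) (Or.inl (ne_of_gt hs.1))) hq.continuousAt
          simpa [Function.comp_def] using this
        exact hrp.mul ((hY'.comp (continuous_snd.sub continuous_const)).continuousAt)
      refine ContinuousWithinAt.congr_of_eventuallyEq hcont.continuousWithinAt hev ?_
      exact Set.indicator_of_mem (Set.mem_Ioc.mpr ⟨hs.1, le_of_lt hlt⟩) _
    · -- s > p₀.2 : eventually the indicator is off
      have h1 : {p : ℝ × ℝ | p.2 < s} ∈ 𝓝 p₀ :=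
        (isOpen_lt continuous_snd continuous_const).mem_nhds hgt
      have hev : ∀ᶠ p in 𝓝[S] p₀, G p s = 0 := by
        filter_upwards [nhdsWithin_le_nhds h1] with p hp
        exact Set.indicator_of_notMem (fun hmem => absurd hmem.2 (not_le.mpr hp)) _
      refine ContinuousWithinAt.congr_of_eventuallyEq continuousWithinAt_const hev ?_
      exact Set.indicator_of_notMem (fun hmem => absurd hmem.2 (not_le.mpr hgt)) _


lemma Jt_cont {c d a Wb B0 : ℝ} {W : ℝ → ℝ} {NS : ℝ × ℝ → ℝ}
    (hcd : c ≤ d) (hW : ContinuousOn W (Icc c d))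
    (hNS : ContinuousOn NS (Icc c d ×ˢ Icc 0 a))
    (hWb : ∀ γ ∈ Icc c d, ‖W γ‖ ≤ Wb) (hWb0 : 0 ≤ Wb)
    (hB : ∀ p ∈ Icc c d ×ˢ Icc (0:ℝ) a, |NS p| ≤ B0) :
    ContinuousOn (fun t => ∫ γ in c..d, W γ * NS (γ, t)) (Icc 0 a) := by
  intro t₀ ht₀
  apply intervalIntegral.continuousWithinAt_of_dominated_interval
    (bound := fun _ => Wb * B0)
  · filter_upwards [eventually_mem_nhdsWithin] with t htI
    have hcont : ContinuousOn (fun γ => W γ * NS (γ, t)) (Icc c d) := by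
      apply hW.mul
      apply hNS.comp (Continuous.continuousOn (by continuity))
      intro γ hγ
      exact ⟨hγ, htI⟩
    rw [Set.uIoc_of_le hcd]
    exact (hcont.mono Ioc_subset_Icc_self).aestronglyMeasurable measurableSet_Ioc
  · filter_upwards [eventually_mem_nhdsWithin] with t htI
    apply ae_of_all
    intro γ hγ
    rw [Set.uIoc_of_le hcd] at hγ
    have hγ' : γ ∈ Icc c d := Ioc_subset_Icc_self hγ
    rw [norm_mul]
    apply mul_le_mul (hWb γ hγ') _ (norm_nonneg _) hWb0
    rw [Real.norm_eq_abs]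
    exact hB (γ, t) ⟨hγ', htI⟩
  · exact intervalIntegrable_const
  · apply ae_of_all
    intro γ hγ
    rw [Set.uIoc_of_le hcd] at hγ
    have hγ' : γ ∈ Icc c d := Ioc_subset_Icc_self hγ
    apply ContinuousWithinAt.mul continuousWithinAt_const
    apply (hNS.comp (Continuous.continuousOn (by continuity)) (fun τ hτ => ⟨hγ', hτ⟩)) t₀ ht₀


/-- Distributed-order fractional integral
`Jy(t) = ∫_c^d (φ(γ)/Γ(2-γ)) ∫₀ᵗ (t-x)^{1-γ} y(x) dx dγ`. -/
noncomputable def distJ (c d : ℝ) (φ y : ℝ → ℝ) (t : ℝ) : ℝ :=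
  ∫ γ in c..d, (φ γ / Real.Gamma (2 - γ)) * ∫ x in (0:ℝ)..t, (t - x) ^ (1 - γ) * y x

/-- if `y ∈ C¹([0,a])` with `y(0) = 0`, then `Jy` is `C¹` on
`[0,a]` with `(d/dt) Jy = Jy'`. -/
theorem distJ_deriv
    (a c d : ℝ) (ha : 0 < a) (hc : 0 ≤ c) (hcd : c < d) (hd : d < 2)
    (φ : ℝ → ℝ) (hφ : ContinuousOn φ (Set.Icc c d))
    (y y' : ℝ → ℝ) (hy' : ContinuousOn y' (Set.Icc 0 a))
    (hy : ∀ t ∈ Set.Icc (0:ℝ) a, HasDerivWithinAt y (y' t) (Set.Icc 0 a) t)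
    (hy0 : y 0 = 0) :
    ContinuousOn (distJ c d φ y') (Set.Icc 0 a) ∧
    ∀ t ∈ Set.Icc (0:ℝ) a,
      HasDerivWithinAt (distJ c d φ y) (distJ c d φ y' t) (Set.Icc 0 a) t := by
  have ha' : (0:ℝ) ≤ a := ha.le
  -- continuous global extension of y'
  set Y' : ℝ → ℝ := fun x => y' (min (max x 0) a) with hY'def
  have hY'c : Continuous Y' := ext_continuous (lo := 0) (hi := a) (f := y') ha' hy'
  have hY'eq : ∀ x ∈ Icc (0:ℝ) a, Y' x = y' x :=
    fun x hx => ext_eq (lo := 0) (hi := a) (f := y') hx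
  obtain ⟨M, hMb⟩ := isCompact_Icc.exists_bound_of_continuousOn hy'
  have hM : ∀ x, |Y' x| ≤ M := by
    intro x
    rw [← Real.norm_eq_abs]
    exact hMb _ ⟨le_min (le_max_right _ _) ha', min_le_right _ _⟩
  have hM0 : 0 ≤ M := (abs_nonneg _).trans (hM 0)
  -- the weight W
  set W : ℝ → ℝ := fun γ => φ γ / Real.Gamma (2 - γ) with hWdef
  have hWc : ContinuousOn W (Icc c d) := by
    apply hφ.div
    · intro γ hγ
      have h2γ : (0:ℝ) < 2 - γ := by linarith [hγ.2]
      have hGne : ∀ m : ℕ, 2 - γ ≠ -m := by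
        intro m hEq
        have : (0:ℝ) ≤ (m:ℝ) := Nat.cast_nonneg m
        rw [hEq] at h2γ; linarith
      exact (((Real.differentiableAt_Gamma hGne).continuousAt).comp
        ((continuous_const.sub continuous_id).continuousAt)).continuousWithinAt
    · intro γ hγ
      exact (Real.Gamma_pos_of_pos (by linarith [hγ.2])).ne'
  obtain ⟨Wb, hWb⟩ := isCompact_Icc.exists_bound_of_continuousOn hWc
  have hWb0 : 0 ≤ Wb := (norm_nonneg _).trans (hWb c ⟨le_refl c, hcd.le⟩)
  -- the two forms of the fractional integral of Y'
  set NS : ℝ × ℝ → ℝ := fun p => ∫ s in (0:ℝ)..p.2, s ^ (1 - p.1) * Y' (p.2 - s) with hNS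
  set NX : ℝ × ℝ → ℝ := fun p => ∫ x in (0:ℝ)..p.2, (p.2 - x) ^ (1 - p.1) * Y' x with hNX
  have hNXS : ∀ p : ℝ × ℝ, NX p = NS p := by
    intro p
    rw [hNX, hNS]
    have := intervalIntegral.integral_comp_sub_left (a := 0) (b := p.2)
      (fun s => s ^ (1 - p.1) * Y' (p.2 - s)) p.2
    simp only [sub_sub_cancel, sub_zero, sub_self] at this
    exact this
  have hNSc : ContinuousOn NS (Icc c d ×ˢ Icc 0 a) := by
    rw [hNS]
    exact JC hcd.le hd ha' hY'c hM
  set Jt : ℝ → ℝ := fun t => ∫ γ in c..d, W γ * NS (γ, t) with hJt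
  -- uniform bound for NS
  set A : ℝ := max a 1 with hA
  have hA1 : (1:ℝ) ≤ A := le_max_right _ _
  set B0 : ℝ := M * (A ^ (2:ℝ) / (2 - d)) with hB0
  have hNsb : ∀ p ∈ Icc c d ×ˢ Icc (0:ℝ) a, |NS p| ≤ B0 := by
    rintro ⟨γ, t⟩ ⟨hγ, htI⟩
    have hr : (-1:ℝ) < 1 - γ := by linarith [hγ.2]
    have h2γ : (0:ℝ) < 1 - γ + 1 := by linarith [hγ.2]
    have step1 : |NS (γ, t)| ≤ ∫ s in (0:ℝ)..t, M * s ^ (1 - γ) := by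
      rw [hNS]
      calc |∫ s in (0:ℝ)..t, s ^ (1 - γ) * Y' (t - s)|
          ≤ ∫ s in (0:ℝ)..t, ‖s ^ (1 - γ) * Y' (t - s)‖ := by
            rw [← Real.norm_eq_abs]
            exact intervalIntegral.norm_integral_le_integral_norm htI.1
        _ ≤ ∫ s in (0:ℝ)..t, M * s ^ (1 - γ) := by
            apply intervalIntegral.integral_mono_on htI.1
            · exact ((intervalIntegrable_rpow' hr).mul_continuousOn
                ((hY'c.comp (continuous_const.sub continuous_id)).continuousOn)).norm
            · exact (intervalIntegrable_rpow' hr).const_mul M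
            · intro s hs
              rw [norm_mul, Real.norm_eq_abs, Real.norm_eq_abs,
                abs_of_nonneg (Real.rpow_nonneg hs.1 _), mul_comm M]
              exact mul_le_mul_of_nonneg_left (hM _) (Real.rpow_nonneg hs.1 _)
    have step2 : (∫ s in (0:ℝ)..t, M * s ^ (1 - γ)) = M * (t ^ (1 - γ + 1) / (1 - γ + 1)) := by
      rw [intervalIntegral.integral_const_mul, integral_rpow (Or.inl hr),
        Real.zero_rpow (by linarith), sub_zero]
    have step3 : M * (t ^ (1 - γ + 1) / (1 - γ + 1)) ≤ B0 := by
      rw [hB0]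
      apply mul_le_mul_of_nonneg_left _ hM0
      have ht' : t ≤ A := le_trans htI.2 (le_max_left _ _)
      have h1 : t ^ (1 - γ + 1) ≤ A ^ (1 - γ + 1) := Real.rpow_le_rpow htI.1 ht' h2γ.le
      have h2 : A ^ (1 - γ + 1) ≤ A ^ (2:ℝ) :=
        Real.rpow_le_rpow_of_exponent_le hA1 (by linarith [hγ.1])
      exact div_le_div₀ (Real.rpow_nonneg (by linarith) 2) (h1.trans h2)
        (by linarith) (by linarith [hγ.2])
    exact (step1.trans_eq step2).trans step3
  -- continuity of Jt
  have hJtc : ContinuousOn Jt (Icc 0 a) := by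
    rw [hJt]
    exact Jt_cont hcd.le hWc hNSc hWb hWb0 hNsb
  -- distJ of y' equals Jt on Icc 0 a
  have eqJ' : ∀ t ∈ Icc (0:ℝ) a, distJ c d φ y' t = Jt t := by
    intro t htI
    rw [hJt, distJ]
    apply intervalIntegral.integral_congr
    intro γ hγ
    rw [uIcc_of_le hcd.le] at hγ
    beta_reduce
    congr 1
    rw [← hNXS (γ, t)]
    simp only [hNX]
    apply intervalIntegral.integral_congr
    intro x hx
    rw [uIcc_of_le htI.1] at hx
    beta_reduce
    rw [hY'eq x ⟨hx.1, hx.2.trans htI.2⟩]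
  -- the fundamental identity: distJ y is a primitive of Jt
  have star : ∀ t ∈ Icc (0:ℝ) a, distJ c d φ y t = ∫ σ in (0:ℝ)..t, Jt σ := by
    intro t htI
    have ht0 : (0:ℝ) ≤ t := htI.1
    have hyInt : ∀ x ∈ Icc (0:ℝ) t, y x = ∫ u in (0:ℝ)..x, Y' u := by
      intro x hx
      have hxa : x ∈ Icc (0:ℝ) a := ⟨hx.1, hx.2.trans htI.2⟩
      have hcont : ContinuousOn y (Icc 0 x) := fun u hu =>
        ((hy u ⟨hu.1, hu.2.trans hxa.2⟩).continuousWithinAt).mono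
          (Icc_subset_Icc_right hxa.2)
      have hderiv : ∀ u ∈ Ioo (0:ℝ) x, HasDerivWithinAt y (y' u) (Ioi u) u := by
        intro u hu
        have hua : u ∈ Icc (0:ℝ) a := ⟨hu.1.le, (hu.2.trans_le hxa.2).le⟩
        exact ((hy u hua).hasDerivAt
          (Icc_mem_nhds hu.1 (hu.2.trans_le hxa.2))).hasDerivWithinAt
      have hint : IntervalIntegrable y' volume 0 x := by
        apply ContinuousOn.intervalIntegrable
        rw [uIcc_of_le hx.1]
        exact hy'.mono (Icc_subset_Icc_right hxa.2)
      have hval := intervalIntegral.integral_eq_sub_of_hasDeriv_right_of_le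
        hx.1 hcont hderiv hint
      rw [hy0, sub_zero] at hval
      rw [← hval]
      apply intervalIntegral.integral_congr
      intro u hu
      rw [uIcc_of_le hx.1] at hu
      exact (hY'eq u ⟨hu.1, hu.2.trans hxa.2⟩).symm
    have hinteg : Integrable (fun p : ℝ × ℝ => W p.1 * NX (p.1, p.2))
        ((volume.restrict (Ioc c d)).prod (volume.restrict (Ioc 0 t))) := by
      rw [Measure.prod_restrict]
      have hcont2 : ContinuousOn (fun p : ℝ × ℝ => W p.1 * NX (p.1, p.2))
          (Icc c d ×ˢ Icc 0 t) := by
        have hee : (fun p : ℝ × ℝ => W p.1 * NX (p.1, p.2))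
            = fun p : ℝ × ℝ => W p.1 * NS p := by
          funext p; rw [← hNXS p]
        rw [hee]
        apply ContinuousOn.mul
        · exact hWc.comp continuousOn_fst (fun p hp => hp.1)
        · exact hNSc.mono (Set.prod_mono subset_rfl (Icc_subset_Icc_right htI.2))
      have hIO : IntegrableOn (fun p : ℝ × ℝ => W p.1 * NX (p.1, p.2))
          (Icc c d ×ˢ Icc 0 t) (volume.prod volume) := by
        rw [← Measure.volume_eq_prod]
        exact hcont2.integrableOn_compact' (isCompact_Icc.prod isCompact_Icc)
          (measurableSet_Icc.prod measurableSet_Icc)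
      exact hIO.mono_set (Set.prod_mono Ioc_subset_Icc_self Ioc_subset_Icc_self)
    calc distJ c d φ y t
        = ∫ γ in c..d, W γ * ∫ σ in (0:ℝ)..t, NX (γ, σ) := by
          rw [distJ]
          apply intervalIntegral.integral_congr
          intro γ hγ
          rw [uIcc_of_le hcd.le] at hγ
          have hr : (-1:ℝ) < 1 - γ := by linarith [hγ.2]
          have e1 := K5 (r := 1 - γ) (Y := y) (Y' := Y') hr ht0 hY'c hM
            (fun x hx => hyInt x hx)
          have e2 := K6 (r := 1 - γ) (Y' := Y') hr ht0 hY'c hM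
          beta_reduce
          congr 1
          rw [e1, ← e2]
      _ = ∫ γ in Ioc c d, ∫ σ in Ioc (0:ℝ) t, W γ * NX (γ, σ) := by
          rw [intervalIntegral.integral_of_le hcd.le]
          apply setIntegral_congr_fun measurableSet_Ioc
          intro γ _
          beta_reduce
          rw [intervalIntegral.integral_of_le ht0, ← MeasureTheory.integral_const_mul]
      _ = ∫ σ in Ioc (0:ℝ) t, ∫ γ in Ioc c d, W γ * NX (γ, σ) :=
          MeasureTheory.integral_integral_swap (by exact hinteg)
      _ = ∫ σ in (0:ℝ)..t, Jt σ := by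
          rw [intervalIntegral.integral_of_le ht0]
          apply setIntegral_congr_fun measurableSet_Ioc
          intro σ _
          beta_reduce
          simp only [hJt]
          rw [intervalIntegral.integral_of_le hcd.le]
          apply setIntegral_congr_fun measurableSet_Ioc
          intro γ _
          beta_reduce
          rw [hNXS]
  constructor
  · exact hJtc.congr (fun t htI => eqJ' t htI)
  · intro t htI
    haveI : Fact (t ∈ Icc (0:ℝ) a) := ⟨htI⟩
    have hii : IntervalIntegrable Jt volume 0 t := by
      apply ContinuousOn.intervalIntegrable
      rw [uIcc_of_le htI.1]
      exact hJtc.mono (Icc_subset_Icc_right htI.2)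
    have hmeasF : StronglyMeasurableAtFilter Jt (nhdsWithin t (Icc (0:ℝ) a)) :=
      ⟨Icc 0 a, self_mem_nhdsWithin, hJtc.aestronglyMeasurable measurableSet_Icc⟩
    have HD := intervalIntegral.integral_hasDerivWithinAt_right (s := Icc (0:ℝ) a)
      (t := Icc (0:ℝ) a) hii hmeasF (hJtc t htI)
    rw [eqJ' t htI]
    exact HD.congr (fun u hu => star u hu) (star t htI)
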